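/- Let C be a nonempty closed convex subset of a real Hilbert space H, let (T_i)_{i≥1} be a family of nonexpansive mappings T_i : C → C with ⋂_{i=1}^∞ Fix(T_i) ≠ ∅, and let (μ_i) be reals with 0 < μ_i ≤ μ < 1 for all i ≥ 1. Then for each n ≥ 1 the W-mapping W_n is nonexpansive and Fix(W_n) = ⋂_{i=1}^n Fix(T_i). -/

import Mathlib

/-- The mappings `U n k` of Shimoji–Takahashi: `U n k = I` for `k ≥ n+1` and
`U n k = μ k • T k ∘ U n (k+1) + (1 - μ k) • I` for `k ≤ n`. -/
noncomputable def Umap {H : Type*} [AddCommGroup H] [Module ℝ H]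
    (T : ℕ → H → H) (μ : ℕ → ℝ) (n k : ℕ) (x : H) : H :=
  if n + 1 ≤ k then x
  else μ k • T k (Umap T μ n (k + 1) x) + (1 - μ k) • x
termination_by n + 1 - k
decreasing_by omega

/-- The `W`-mapping `W n = U n 1` generated by `T 1, T 2, …` and `μ 1, μ 2, …`. -/
noncomputable def Wmap {H : Type*} [AddCommGroup H] [Module ℝ H]
    (T : ℕ → H → H) (μ : ℕ → ℝ) (n : ℕ) (x : H) : H :=
  Umap T μ n 1 x

lemma umap_of_le {H : Type*} [AddCommGroup H] [Module ℝ H]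
    (T : ℕ → H → H) (μ : ℕ → ℝ) {n k : ℕ} (x : H) (h : n + 1 ≤ k) :
    Umap T μ n k x = x := by
  rw [Umap, if_pos h]

lemma umap_of_gt {H : Type*} [AddCommGroup H] [Module ℝ H]
    (T : ℕ → H → H) (μ : ℕ → ℝ) {n k : ℕ} (x : H) (h : k ≤ n) :
    Umap T μ n k x = μ k • T k (Umap T μ n (k + 1) x) + (1 - μ k) • x := by
  rw [Umap, if_neg (by omega)]

lemma eq_of_combo {H : Type*} [NormedAddCommGroup H] [InnerProductSpace ℝ H]
    {a b : H} {t : ℝ} (h0 : 0 < t) (h1 : t < 1)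
    (hab : ‖a‖ = ‖b‖) (hc : ‖t • a + (1 - t) • b‖ = ‖b‖) : a = b := by
  have key : ‖t • a + (1 - t) • b‖ ^ 2
      = t ^ 2 * ‖a‖ ^ 2 + 2 * t * (1 - t) * (inner ℝ a b : ℝ) + (1 - t) ^ 2 * ‖b‖ ^ 2 := by
    rw [norm_add_sq_real, norm_smul, norm_smul, real_inner_smul_left, real_inner_smul_right,
      Real.norm_eq_abs, Real.norm_eq_abs,
      abs_of_pos h0, abs_of_pos (by linarith : (0:ℝ) < 1 - t)]
    ring
  have hsub : ‖a - b‖ ^ 2 = ‖a‖ ^ 2 - 2 * (inner ℝ a b : ℝ) + ‖b‖ ^ 2 := norm_sub_sq_real a b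
  rw [hc, hab] at key
  have hI : (inner ℝ a b : ℝ) = ‖b‖ ^ 2 := by
    nlinarith [mul_pos h0 (by linarith : (0:ℝ) < 1 - t)]
  have hz : ‖a - b‖ = 0 := by
    have : ‖a - b‖ ^ 2 = 0 := by rw [hsub, hab, hI]; ring
    exact pow_eq_zero_iff (by norm_num) |>.mp this
  exact sub_eq_zero.mp (norm_eq_zero.mp hz)

/-- For an infinite family of nonexpansive self-maps `T i` of a nonempty closed
convex `C ⊆ H` with common fixed point, and `0 < μ i ≤ μbar < 1`, each
`W`-mapping `W n` is nonexpansive on `C` and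
`Fix(W n) = ⋂_{i=1}^{n} Fix(T i)`. -/
theorem stmt_10 {H : Type*} [NormedAddCommGroup H] [InnerProductSpace ℝ H]
    [CompleteSpace H]
    (C : Set H) (hCne : C.Nonempty) (hCcl : IsClosed C) (hCcv : Convex ℝ C)
    (T : ℕ → H → H)
    (hTmaps : ∀ i, 1 ≤ i → Set.MapsTo (T i) C C)
    (hTne : ∀ i, 1 ≤ i → ∀ x ∈ C, ∀ y ∈ C, ‖T i x - T i y‖ ≤ ‖x - y‖)
    (hFix : ∃ x ∈ C, ∀ i, 1 ≤ i → T i x = x)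
    (μ : ℕ → ℝ) (μbar : ℝ) (hμbar : μbar < 1)
    (hμ : ∀ i, 1 ≤ i → 0 < μ i ∧ μ i ≤ μbar) :
    ∀ n, 1 ≤ n →
      (∀ x ∈ C, ∀ y ∈ C, ‖Wmap T μ n x - Wmap T μ n y‖ ≤ ‖x - y‖) ∧
      {x : H | x ∈ C ∧ Wmap T μ n x = x}
        = ⋂ i ∈ Set.Icc 1 n, {x : H | x ∈ C ∧ T i x = x} := by
  intro n hn
  obtain ⟨z, hzC, hzfix⟩ := hFix
  -- basic facts about μ
  have hμ0 : ∀ i, 1 ≤ i → 0 < μ i := fun i hi => (hμ i hi).1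
  have hμ1 : ∀ i, 1 ≤ i → μ i < 1 := fun i hi => lt_of_le_of_lt (hμ i hi).2 hμbar
  -- U k maps C into C
  have Umem0 : ∀ d k, n + 1 ≤ k + d → 1 ≤ k → ∀ x ∈ C, Umap T μ n k x ∈ C := by
    intro d
    induction d with
    | zero =>
      intro k h hk x hx
      rw [umap_of_le T μ x (by omega)]; exact hx
    | succ d ih =>
      intro k h hk x hx
      by_cases hkn : n + 1 ≤ k
      · rw [umap_of_le T μ x hkn]; exact hx
      · rw [umap_of_gt T μ x (by omega)]
        have h1 : Umap T μ n (k + 1) x ∈ C := ih (k + 1) (by omega) (by omega) x hx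
        exact hCcv (hTmaps k hk h1) hx (le_of_lt (hμ0 k hk))
          (by linarith [hμ1 k hk]) (by ring)
  have Umem : ∀ k, 1 ≤ k → ∀ x ∈ C, Umap T μ n k x ∈ C :=
    fun k hk x hx => Umem0 (n + 1) k (by omega) hk x hx
  -- U k is nonexpansive on C
  have Une0 : ∀ d k, n + 1 ≤ k + d → 1 ≤ k → ∀ x ∈ C, ∀ y ∈ C,
      ‖Umap T μ n k x - Umap T μ n k y‖ ≤ ‖x - y‖ := by
    intro d
    induction d with
    | zero =>
      intro k h hk x hx y hy
      rw [umap_of_le T μ x (by omega), umap_of_le T μ y (by omega)]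
    | succ d ih =>
      intro k h hk x hx y hy
      by_cases hkn : n + 1 ≤ k
      · rw [umap_of_le T μ x hkn, umap_of_le T μ y hkn]
      · rw [umap_of_gt T μ x (by omega), umap_of_gt T μ y (by omega)]
        set a := T k (Umap T μ n (k + 1) x)
        set b := T k (Umap T μ n (k + 1) y)
        have hmemx : Umap T μ n (k + 1) x ∈ C := Umem (k + 1) (by omega) x hx
        have hmemy : Umap T μ n (k + 1) y ∈ C := Umem (k + 1) (by omega) y hy
        have hab : ‖a - b‖ ≤ ‖x - y‖ := by
          calc ‖a - b‖ ≤ ‖Umap T μ n (k + 1) x - Umap T μ n (k + 1) y‖ :=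
                hTne k hk _ hmemx _ hmemy
            _ ≤ ‖x - y‖ := ih (k + 1) (by omega) (by omega) x hx y hy
        have hsplit : (μ k • a + (1 - μ k) • x) - (μ k • b + (1 - μ k) • y)
            = μ k • (a - b) + (1 - μ k) • (x - y) := by module
        rw [hsplit]
        calc ‖μ k • (a - b) + (1 - μ k) • (x - y)‖
            ≤ ‖μ k • (a - b)‖ + ‖(1 - μ k) • (x - y)‖ := norm_add_le _ _
          _ = μ k * ‖a - b‖ + (1 - μ k) * ‖x - y‖ := by
              rw [norm_smul, norm_smul, Real.norm_eq_abs, Real.norm_eq_abs,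
                abs_of_pos (hμ0 k hk), abs_of_pos (by linarith [hμ1 k hk])]
          _ ≤ μ k * ‖x - y‖ + (1 - μ k) * ‖x - y‖ := by
              have := hμ0 k hk
              nlinarith
          _ = ‖x - y‖ := by ring
  have Une : ∀ k, 1 ≤ k → ∀ x ∈ C, ∀ y ∈ C,
      ‖Umap T μ n k x - Umap T μ n k y‖ ≤ ‖x - y‖ :=
    fun k hk => Une0 (n + 1) k (by omega) hk
  -- points fixed by all T i, 1 ≤ i ≤ n, are fixed by all U k
  have Ufix0 : ∀ d k, n + 1 ≤ k + d → 1 ≤ k → ∀ x, (∀ i, 1 ≤ i → i ≤ n → T i x = x) →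
      Umap T μ n k x = x := by
    intro d
    induction d with
    | zero =>
      intro k h hk x hx
      exact umap_of_le T μ x (by omega)
    | succ d ih =>
      intro k h hk x hx
      by_cases hkn : n + 1 ≤ k
      · exact umap_of_le T μ x hkn
      · rw [umap_of_gt T μ x (by omega), ih (k + 1) (by omega) (by omega) x hx,
          hx k hk (by omega)]
        module
  have Ufix : ∀ k, 1 ≤ k → ∀ x, (∀ i, 1 ≤ i → i ≤ n → T i x = x) → Umap T μ n k x = x :=
    fun k hk x hx => Ufix0 (n + 1) k (by omega) hk x hx
  have hUz : ∀ k, 1 ≤ k → Umap T μ n k z = z :=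
    fun k hk => Ufix k hk z (fun i hi _ => hzfix i hi)
  have hdist : ∀ k, 1 ≤ k → ∀ x ∈ C, ‖Umap T μ n k x - z‖ ≤ ‖x - z‖ := by
    intro k hk x hx
    have := Une k hk x hx z hzC
    rwa [hUz k hk] at this
  constructor
  · -- nonexpansiveness of W n
    intro x hx y hy
    exact Une 1 le_rfl x hx y hy
  · -- fixed point set equality
    ext x
    simp only [Set.mem_setOf_eq, Set.mem_iInter, Set.mem_Icc]
    constructor
    · rintro ⟨hxC, hWx⟩
      have hU1 : Umap T μ n 1 x = x := hWx
      -- upward pass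
      have up : ∀ k, 1 ≤ k → k ≤ n + 1 →
          ‖Umap T μ n k x - z‖ = ‖x - z‖ ∧
          (∀ j, 1 ≤ j → j + 1 ≤ k → T j (Umap T μ n (j + 1) x) = x) := by
        intro k hk
        induction k, hk using Nat.le_induction with
        | base =>
          intro _
          refine ⟨by rw [hU1], fun j hj hj1 => absurd hj1 (by omega)⟩
        | succ k hk ih =>
          intro hk1
          obtain ⟨hnorm, hjs⟩ := ih (by omega)
          have hkn : k ≤ n := by omega
          set A := Umap T μ n (k + 1) x with hA
          have hAC : A ∈ C := Umem (k + 1) (by omega) x hxC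
          have h1 : ‖T k A - z‖ ≤ ‖A - z‖ := by
            have := hTne k hk A hAC z hzC
            rwa [hzfix k hk] at this
          have h2 : ‖A - z‖ ≤ ‖x - z‖ := hdist (k + 1) (by omega) x hxC
          have hdecomp : Umap T μ n k x - z
              = μ k • (T k A - z) + (1 - μ k) • (x - z) := by
            rw [umap_of_gt T μ x hkn, ← hA]; module
          have hcomb : ‖μ k • (T k A - z) + (1 - μ k) • (x - z)‖ = ‖x - z‖ := by
            rw [← hdecomp]; exact hnorm
          have hbound : ‖μ k • (T k A - z) + (1 - μ k) • (x - z)‖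
              ≤ μ k * ‖T k A - z‖ + (1 - μ k) * ‖x - z‖ := by
            calc ‖μ k • (T k A - z) + (1 - μ k) • (x - z)‖
                ≤ ‖μ k • (T k A - z)‖ + ‖(1 - μ k) • (x - z)‖ := norm_add_le _ _
              _ = μ k * ‖T k A - z‖ + (1 - μ k) * ‖x - z‖ := by
                  rw [norm_smul, norm_smul, Real.norm_eq_abs, Real.norm_eq_abs,
                    abs_of_pos (hμ0 k hk), abs_of_pos (by linarith [hμ1 k hk])]
          have hμk := hμ0 k hk
          have heq1 : ‖T k A - z‖ = ‖x - z‖ := by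
            rw [hcomb] at hbound
            nlinarith [h1, h2]
          have heq2 : ‖A - z‖ = ‖x - z‖ := le_antisymm h2 (heq1 ▸ h1)
          have hTA : T k A = x := by
            have h' : T k A - z = x - z := eq_of_combo hμk (hμ1 k hk) heq1 hcomb
            exact sub_left_injective h'
          refine ⟨heq2, fun j hj hj1 => ?_⟩
          by_cases hjk : j + 1 ≤ k
          · exact hjs j hj hjk
          · have : j = k := by omega
            subst this
            exact hTA
      have hTs : ∀ j, 1 ≤ j → j ≤ n → T j (Umap T μ n (j + 1) x) = x :=
        fun j hj hjn => (up (n + 1) (by omega) le_rfl).2 j hj (by omega)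
      -- downward pass: U k x = x for all k ≥ 1
      have down : ∀ d k, n + 1 ≤ k + d → 1 ≤ k → Umap T μ n k x = x := by
        intro d
        induction d with
        | zero => intro k h hk; exact umap_of_le T μ x (by omega)
        | succ d ih =>
          intro k h hk
          by_cases hkn : n + 1 ≤ k
          · exact umap_of_le T μ x hkn
          · rw [umap_of_gt T μ x (by omega), hTs k hk (by omega)]
            module
      intro i hi
      refine ⟨hxC, ?_⟩
      have hUi : Umap T μ n (i + 1) x = x := down (n + 1) (i + 1) (by omega) (by omega)
      have := hTs i hi.1 hi.2
      rwa [hUi] at this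
    · intro hall
      have hxC : x ∈ C := (hall 1 ⟨le_rfl, hn⟩).1
      have hTfix : ∀ i, 1 ≤ i → i ≤ n → T i x = x := fun i h1 h2 => (hall i ⟨h1, h2⟩).2
      exact ⟨hxC, Ufix 1 le_rfl x hTfix⟩
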